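/- The 2n+1-dimensional Heisenberg Lie algebras over different fields: the rational Lie algebras g = H(n, ℚ(√2)) (viewed as a Lie algebra over ℚ of dimension 2(2n+1)) and h = H(n,ℚ) ⊕ H(n,ℚ) are not isomorphic as ℚ-Lie algebras, because every element of g has centralizer of ℚ-codimension 0 or ≥ 2, while h contains an element whose centralizer has ℚ-codimension exactly 1. -/

import Mathlib

/-- The `2n+1`-dimensional Heisenberg Lie algebra over a commutative ring `K`,
with underlying space `K^n × K^n × K` (the `x`-vector, the `y`-vector, and the `z`
coordinate of the corresponding strictly upper triangular matrix). -/
def Heis (n : ℕ) (K : Type) [CommRing K] : Type := (Fin n → K) × (Fin n → K) × K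

variable {n : ℕ} {K : Type} [CommRing K]

instance : AddCommGroup (Heis n K) :=
  inferInstanceAs (AddCommGroup ((Fin n → K) × (Fin n → K) × K))

instance (R : Type) [CommRing R] [Module R K] : Module R (Heis n K) :=
  inferInstanceAs (Module R ((Fin n → K) × (Fin n → K) × K))

instance : LieRing (Heis n K) where
  bracket x y := (0, 0, (∑ i, x.1 i * y.2.1 i) - ∑ i, y.1 i * x.2.1 i)
  add_lie x y z := by
    show ((0, 0, (∑ i, (x.1 i + y.1 i) * z.2.1 i) - ∑ i, z.1 i * (x.2.1 i + y.2.1 i)) :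
        (Fin n → K) × (Fin n → K) × K)
        = (0, 0, (∑ i, x.1 i * z.2.1 i) - ∑ i, z.1 i * x.2.1 i)
          + (0, 0, (∑ i, y.1 i * z.2.1 i) - ∑ i, z.1 i * y.2.1 i)
    refine Prod.ext (by simp; exact (add_zero _).symm)
      (Prod.ext (by simp; exact (add_zero _).symm) ?_)
    show _ = (_ : K) + _
    simp only [add_mul, mul_add, Finset.sum_add_distrib, Prod.snd_add, Prod.fst_add]
    ring
  lie_add x y z := by
    show ((0, 0, (∑ i, x.1 i * (y.2.1 i + z.2.1 i)) - ∑ i, (y.1 i + z.1 i) * x.2.1 i) :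
        (Fin n → K) × (Fin n → K) × K)
        = (0, 0, (∑ i, x.1 i * y.2.1 i) - ∑ i, y.1 i * x.2.1 i)
          + (0, 0, (∑ i, x.1 i * z.2.1 i) - ∑ i, z.1 i * x.2.1 i)
    refine Prod.ext (by simp; exact (add_zero _).symm)
      (Prod.ext (by simp; exact (add_zero _).symm) ?_)
    show _ = (_ : K) + _
    simp only [add_mul, mul_add, Finset.sum_add_distrib, Prod.snd_add, Prod.fst_add]
    ring
  lie_self x := by
    show ((0, 0, (∑ i, x.1 i * x.2.1 i) - ∑ i, x.1 i * x.2.1 i) :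
        (Fin n → K) × (Fin n → K) × K) = 0
    simp
  leibniz_lie x y z := by
    refine Prod.ext ?_ (Prod.ext ?_ ?_) <;>
      · show _ = _
        simp [Prod.fst_add, Prod.snd_add, mul_comm]
        try ring
        try exact (add_zero _).symm

instance (R : Type) [CommRing R] [Module R K] [SMulCommClass R K K] [IsScalarTower R K K] :
    LieAlgebra R (Heis n K) where
  lie_smul r x y := by
    show ((0, 0, (∑ i, x.1 i * (r • y.2.1 i)) - ∑ i, (r • y.1 i) * x.2.1 i) :
        (Fin n → K) × (Fin n → K) × K)
        = r • (0, 0, (∑ i, x.1 i * y.2.1 i) - ∑ i, y.1 i * x.2.1 i)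
    refine Prod.ext (by simp; exact (smul_zero _).symm)
      (Prod.ext (by simp; exact (smul_zero _).symm) ?_)
    show _ = (_ : R) • (_ : K)
    simp [mul_smul_comm, smul_mul_assoc, Finset.smul_sum, smul_sub, Prod.smul_snd, Prod.smul_fst]

open DirectSum

set_option maxHeartbeats 2000000
set_option synthInstance.maxHeartbeats 2000000

/-- The field `ℚ(√2)`. -/
noncomputable def QSqrt2 : IntermediateField ℚ ℝ :=
  IntermediateField.adjoin ℚ ({Real.sqrt 2} : Set ℝ)

section Aux

open Module LinearMap

lemma heis_bracket_def {n : ℕ} {K : Type} [CommRing K] (x y : Heis n K) :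
    ⁅x, y⁆ = ((0 : Fin n → K), (0 : Fin n → K),
      (∑ i, x.1 i * y.2.1 i) - ∑ i, y.1 i * x.2.1 i) := rfl

instance : FiniteDimensional ℚ QSqrt2 := by
  have h2 : IsIntegral ℚ (Real.sqrt 2) := by
    refine ⟨Polynomial.X ^ 2 - Polynomial.C 2, Polynomial.monic_X_pow_sub_C 2 two_ne_zero, ?_⟩
    simp only [Polynomial.eval₂_sub, Polynomial.eval₂_pow, Polynomial.eval₂_X,
      Polynomial.eval₂_C]
    rw [Real.sq_sqrt (by norm_num)]
    norm_num
  exact IntermediateField.adjoin.finiteDimensional h2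

instance heisQ2Fin (n : ℕ) : Module.Finite ℚ (Heis n QSqrt2) :=
  inferInstanceAs (Module.Finite ℚ ((Fin n → QSqrt2) × (Fin n → QSqrt2) × QSqrt2))

instance heisQFin (n : ℕ) : Module.Finite ℚ (Heis n ℚ) :=
  inferInstanceAs (Module.Finite ℚ ((Fin n → ℚ) × (Fin n → ℚ) × ℚ))

instance dsumFin (n : ℕ) : Module.Finite ℚ (⨁ _i : Fin 2, Heis n ℚ) :=
  Module.Finite.equiv (DirectSum.linearEquivFunOnFintype ℚ (Fin 2) (fun _ => Heis n ℚ)).symm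

lemma aux_rank_nullity {M : Type*} [AddCommGroup M] [Module ℚ M] [Module.Finite ℚ M]
    (f : M →ₗ[ℚ] M) :
    Module.finrank ℚ M - Module.finrank ℚ (LinearMap.ker f)
      = Module.finrank ℚ (LinearMap.range f) := by
  have h := LinearMap.finrank_range_add_finrank_ker f
  omega

/-- `√2` as an element of `ℚ(√2)`. -/
noncomputable def sq2 : QSqrt2 :=
  ⟨Real.sqrt 2, IntermediateField.subset_adjoin ℚ _ (Set.mem_singleton _)⟩

lemma sq2_indep (a b : ℚ) (h : a • (1 : QSqrt2) + b • sq2 = 0) : a = 0 ∧ b = 0 := by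
  have hR : (a : ℝ) + (b : ℝ) * Real.sqrt 2 = 0 := by
    have := congrArg (Subtype.val : QSqrt2 → ℝ) h
    simpa [sq2, Rat.smul_one_eq_cast, Rat.smul_def] using this
  by_cases hb : b = 0
  · subst hb
    simp at hR
    exact ⟨by exact_mod_cast hR, rfl⟩
  · exfalso
    apply irrational_sqrt_two
    refine ⟨-a / b, ?_⟩
    push_cast
    field_simp at hR ⊢
    linarith [hR]

end Aux

section Aux2

open Module LinearMap

lemma mem_range_ad_heis {n : ℕ} (x : Heis n QSqrt2) (hx : ¬(x.1 = 0 ∧ x.2.1 = 0))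
    (s : QSqrt2) :
    ((0, 0, s) : Heis n QSqrt2) ∈ LinearMap.range (LieAlgebra.ad ℚ (Heis n QSqrt2) x) := by
  show ∃ y, (LieAlgebra.ad ℚ (Heis n QSqrt2) x) y = ((0, 0, s) : Heis n QSqrt2)
  by_cases h1 : x.1 = 0
  · have h2 : x.2.1 ≠ 0 := fun h => hx ⟨h1, h⟩
    obtain ⟨i, hi⟩ := Function.ne_iff.mp h2
    refine ⟨(Pi.single i (-(s / x.2.1 i)), 0, 0), ?_⟩
    erw [LieAlgebra.ad_apply]; erw [heis_bracket_def]
    refine Prod.ext rfl (Prod.ext rfl ?_)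
    have hs1 : (∑ j, x.1 j * ((Pi.single i (-(s / x.2.1 i)), (0 : Fin n → QSqrt2),
        (0 : QSqrt2)) : Heis n QSqrt2).2.1 j) = 0 := by
      simp
    have hs2 : (∑ j, (Pi.single i (-(s / x.2.1 i)) : Fin n → QSqrt2) j * x.2.1 j)
        = -(s / x.2.1 i) * x.2.1 i := by
      rw [Finset.sum_eq_single i (fun j _ hj => by rw [Pi.single_eq_of_ne hj, zero_mul])
        (fun h => absurd (Finset.mem_univ i) h), Pi.single_eq_same]
    show (∑ j, x.1 j * (0 : Fin n → QSqrt2) j) - _ = s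
    rw [hs2]
    simp only [Pi.zero_apply, mul_zero, Finset.sum_const_zero]
    rw [neg_mul, div_mul_cancel₀ s (by exact hi)]
    ring
  · obtain ⟨i, hi⟩ := Function.ne_iff.mp h1
    refine ⟨(0, Pi.single i (s / x.1 i), 0), ?_⟩
    erw [LieAlgebra.ad_apply]; erw [heis_bracket_def]
    refine Prod.ext rfl (Prod.ext rfl ?_)
    show (∑ j, x.1 j * (Pi.single i (s / x.1 i) : Fin n → QSqrt2) j)
        - (∑ j, (0 : Fin n → QSqrt2) j * x.2.1 j) = s
    have hs1 : (∑ j, x.1 j * (Pi.single i (s / x.1 i) : Fin n → QSqrt2) j)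
        = x.1 i * (s / x.1 i) := by
      rw [Finset.sum_eq_single i (fun j _ hj => by rw [Pi.single_eq_of_ne hj, mul_zero])
        (fun h => absurd (Finset.mem_univ i) h), Pi.single_eq_same]
    rw [hs1, mul_comm, div_mul_cancel₀ s (by exact hi)]
    simp

lemma part1_heis {n : ℕ} (x : Heis n QSqrt2) :
    Module.finrank ℚ (Heis n QSqrt2)
        - Module.finrank ℚ (LinearMap.ker (LieAlgebra.ad ℚ _ x)) = 0 ∨
    2 ≤ Module.finrank ℚ (Heis n QSqrt2)
        - Module.finrank ℚ (LinearMap.ker (LieAlgebra.ad ℚ _ x)) := by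
  by_cases hx : x.1 = 0 ∧ x.2.1 = 0
  · left
    have hker : LinearMap.ker (LieAlgebra.ad ℚ (Heis n QSqrt2) x) = ⊤ := by
      ext y
      simp only [LinearMap.mem_ker, Submodule.mem_top, iff_true]
      erw [LieAlgebra.ad_apply]
      rw [heis_bracket_def]
      refine Prod.ext rfl (Prod.ext rfl ?_)
      show _ - _ = (0 : QSqrt2)
      simp [hx.1, hx.2]
    rw [hker, finrank_top, Nat.sub_self]
  · right
    rw [aux_rank_nullity]
    set u : Heis n QSqrt2 := (0, 0, 1) with hu
    set w : Heis n QSqrt2 := (0, 0, sq2) with hw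
    have hli : LinearIndependent ℚ ![u, w] := by
      rw [LinearIndependent.pair_iff]
      intro a b hab
      have h3 : a • (1 : QSqrt2) + b • sq2 = 0 := congrArg (fun v => v.2.2) hab
      exact sq2_indep a b h3
    have hspan : Submodule.span ℚ (Set.range ![u, w])
        ≤ LinearMap.range (LieAlgebra.ad ℚ (Heis n QSqrt2) x) := by
      rw [Submodule.span_le]
      rintro v ⟨j, rfl⟩
      fin_cases j
      · exact mem_range_ad_heis x hx 1
      · exact mem_range_ad_heis x hx sq2
    calc 2 = Module.finrank ℚ (Submodule.span ℚ (Set.range ![u, w])) := by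
            rw [finrank_span_eq_card hli]; simp
      _ ≤ _ := Submodule.finrank_mono hspan

end Aux2

section Aux3

open Module LinearMap

lemma heis_smul_def {n : ℕ} {K : Type} [CommRing K] {R : Type} [CommRing R] [Module R K]
    (c : R) (p : Heis n K) :
    c • p = (c • p.1, c • p.2.1, c • p.2.2) := rfl

lemma heis_bracket_single {n : ℕ} (i0 : Fin n) (w x : Heis n ℚ)
    (hx : x = (Pi.single i0 1, 0, 0)) :
    ⁅x, w⁆ = (w.2.1 i0) • ((0, 0, 1) : Heis n ℚ) := by
  subst hx
  erw [heis_bracket_def, heis_smul_def]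
  refine Prod.ext ?_ (Prod.ext ?_ ?_)
  · show (0 : Fin n → ℚ) = w.2.1 i0 • (0 : Fin n → ℚ)
    rw [smul_zero]
  · show (0 : Fin n → ℚ) = w.2.1 i0 • (0 : Fin n → ℚ)
    rw [smul_zero]
  · show (∑ i, (Pi.single i0 (1 : ℚ) : Fin n → ℚ) i * w.2.1 i)
        - (∑ i, w.1 i * (0 : Fin n → ℚ) i) = w.2.1 i0 • (1 : ℚ)
    rw [Finset.sum_eq_single i0 (fun j _ hj => by rw [Pi.single_eq_of_ne hj, zero_mul])
      (fun h => absurd (Finset.mem_univ i0) h), Pi.single_eq_same]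
    simp

lemma part2_heis {n : ℕ} (hn : 0 < n) :
    ∃ y : ⨁ _i : Fin 2, Heis n ℚ,
        Module.finrank ℚ (⨁ _i : Fin 2, Heis n ℚ)
            - Module.finrank ℚ (LinearMap.ker (LieAlgebra.ad ℚ _ y)) = 1 := by
  set i0 : Fin n := ⟨0, hn⟩
  set v : ⨁ _i : Fin 2, Heis n ℚ :=
    DirectSum.of (fun _ : Fin 2 => Heis n ℚ) 0 ((0, 0, 1) : Heis n ℚ) with hv
  set y : ⨁ _i : Fin 2, Heis n ℚ :=
    DirectSum.of (fun _ : Fin 2 => Heis n ℚ) 0 ((Pi.single i0 1, 0, 0) : Heis n ℚ) with hy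
  have key : ∀ w : ⨁ _i : Fin 2, Heis n ℚ, ⁅y, w⁆ = ((w 0).2.1 i0) • v := by
    intro w
    refine DFinsupp.ext fun j => ?_
    rw [DirectSum.bracket_apply, DFinsupp.smul_apply]
    rcases Fin.exists_fin_two.mp ⟨j, rfl⟩ with rfl | rfl
    · erw [hy, hv, DirectSum.of_eq_same, DirectSum.of_eq_same,
        heis_bracket_single i0 (w 0) _ rfl]; rfl
    · erw [hy, hv, DirectSum.of_eq_of_ne (0 : Fin 2) 1 _ (by decide),
        zero_lie, smul_zero]
  have hrange : LinearMap.range (LieAlgebra.ad ℚ (⨁ _i : Fin 2, Heis n ℚ) y)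
      = Submodule.span ℚ {v} := by
    apply le_antisymm
    · rintro _ ⟨w, rfl⟩
      erw [LieAlgebra.ad_apply]
      rw [key w]
      exact Submodule.smul_mem _ _ (Submodule.mem_span_singleton_self v)
    · rw [Submodule.span_singleton_le_iff_mem, LinearMap.mem_range]
      refine ⟨DirectSum.of (fun _ : Fin 2 => Heis n ℚ) 0
        ((0, Pi.single i0 1, 0) : Heis n ℚ), ?_⟩
      erw [LieAlgebra.ad_apply]
      erw [key, DirectSum.of_eq_same]
      simp [Pi.single_eq_same]
  have hvne : v ≠ 0 := by
    intro h
    have h1 : (v 0).2.2 = (0 : ℚ) := by rw [h]; rfl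
    erw [hv, DirectSum.of_eq_same] at h1
    exact one_ne_zero h1
  refine ⟨y, ?_⟩
  rw [aux_rank_nullity, hrange, finrank_span_singleton hvne]

end Aux3

/-- the rational Lie algebras `g = H(n, ℚ(√2))` (a `ℚ`-Lie algebra of
dimension `2(2n+1)` by restriction of scalars) and `h = H(n,ℚ) ⊕ H(n,ℚ)` are not
isomorphic over `ℚ`: in `g` every element has centralizer of `ℚ`-codimension `0` or
`≥ 2`, while `h` has an element whose centralizer has `ℚ`-codimension exactly `1`. -/
theorem heisenberg_sqrt2_not_isomorphic_to_double (n : ℕ) (hn : 0 < n) :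
    (∀ x : Heis n QSqrt2,
        Module.finrank ℚ (Heis n QSqrt2)
            - Module.finrank ℚ (LinearMap.ker (LieAlgebra.ad ℚ _ x)) = 0 ∨
        2 ≤ Module.finrank ℚ (Heis n QSqrt2)
            - Module.finrank ℚ (LinearMap.ker (LieAlgebra.ad ℚ _ x))) ∧
    (∃ y : ⨁ _i : Fin 2, Heis n ℚ,
        Module.finrank ℚ (⨁ _i : Fin 2, Heis n ℚ)
            - Module.finrank ℚ (LinearMap.ker (LieAlgebra.ad ℚ _ y)) = 1) ∧
    IsEmpty (Heis n QSqrt2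
        ≃ₗ⁅ℚ⁆ (⨁ _i : Fin 2, Heis n ℚ)) := by
  refine ⟨part1_heis, part2_heis hn, ?_⟩
  constructor
  intro e
  obtain ⟨y, hy⟩ := part2_heis (n := n) hn
  set x : Heis n QSqrt2 := e.symm y with hxdef
  have htot : Module.finrank ℚ (Heis n QSqrt2)
      = Module.finrank ℚ (⨁ _i : Fin 2, Heis n ℚ) :=
    e.toLinearEquiv.finrank_eq
  have hmap : (LinearMap.ker (LieAlgebra.ad ℚ (Heis n QSqrt2) x)).map
      (e.toLinearEquiv : Heis n QSqrt2 →ₗ[ℚ] ⨁ _i : Fin 2, Heis n ℚ)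
      = LinearMap.ker (LieAlgebra.ad ℚ (⨁ _i : Fin 2, Heis n ℚ) y) := by
    apply le_antisymm
    · rintro _ ⟨w, hw, rfl⟩
      simp only [SetLike.mem_coe, LinearMap.mem_ker] at hw ⊢
      erw [LieAlgebra.ad_apply] at hw ⊢
      have key : ⁅y, e w⁆ = e ⁅x, w⁆ := by
        conv_lhs => rw [← e.apply_symm_apply y, ← hxdef]
        exact (e.map_lie x w).symm
      show ⁅y, e w⁆ = 0
      rw [key, hw]
      exact map_zero e.toLinearEquiv
    · intro z hz
      simp only [SetLike.mem_coe, LinearMap.mem_ker] at hz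
      erw [LieAlgebra.ad_apply] at hz
      refine ⟨e.symm z, ?_, e.apply_symm_apply z⟩
      simp only [SetLike.mem_coe, LinearMap.mem_ker]
      erw [LieAlgebra.ad_apply]
      have key : ⁅x, e.symm z⁆ = e.symm ⁅y, z⁆ := by
        rw [hxdef]
        exact (e.symm.map_lie y z).symm
      rw [key, hz]
      exact map_zero e.symm.toLinearEquiv
  have hker : Module.finrank ℚ (LinearMap.ker (LieAlgebra.ad ℚ (Heis n QSqrt2) x))
      = Module.finrank ℚ (LinearMap.ker (LieAlgebra.ad ℚ (⨁ _i : Fin 2, Heis n ℚ) y)) := by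
    rw [← hmap, LinearEquiv.finrank_map_eq]
  have h1 := part1_heis x
  rw [htot, hker] at h1
  omega
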